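/- Assume 0 < p_1 < 1 and ∑_k (1−p_1)⋯(1−p_k) < ∞. There exist constants 0 < C₁ < C₂ < ∞ such that for all n ≥ 0, C₁ ∑_{m>n} ℙ(ξ > m) ≤ ℙ(μ > n | μ < ∞) ≤ C₂ ∑_{m>n} ℙ(ξ > m), where ℙ(ξ > m) = (1−p_1)⋯(1−p_m). -/

import Mathlib

open MeasureTheory ProbabilityTheory Filter

/-- Configuration: edge indicators. -/
abbrev Cfg := ℤ → ℤ → Bool

/-- There is an edge from `i` to `j`. -/
def Edge (ω : Cfg) (i j : ℤ) : Prop := i < j ∧ ω i j = true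

/-- There is a directed path from `i` to `j`. -/
def Leads (ω : Cfg) : ℤ → ℤ → Prop := Relation.TransGen (Edge ω)

/-- A list of vertices forming a path inside `{a,...,b}`. -/
def IsPathIn (ω : Cfg) (a b : ℤ) (l : List ℤ) : Prop :=
  l ≠ [] ∧ l.Chain' (Edge ω) ∧ ∀ x ∈ l, a ≤ x ∧ x ≤ b

/-- `L ω a b`: maximal number of edges of a path contained in `{a,...,b}`. -/
noncomputable def L (ω : Cfg) (a b : ℤ) : ℕ :=
  sSup {n | ∃ l : List ℤ, IsPathIn ω a b l ∧ l.length = n + 1}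

/-- `T ω i j`: maximal number of edges of a path from `i` to `j` (0 if none). -/
noncomputable def T (ω : Cfg) (i j : ℤ) : ℕ :=
  sSup {n | ∃ l : List ℤ, l.Chain' (Edge ω) ∧ l.head? = some i ∧
    l.getLast? = some j ∧ l.length = n + 1}

/-- The skeleton of the graph. -/
def Skel (ω : Cfg) : Set ℤ :=
  {n | (∀ j, n < j → Leads ω n j) ∧ (∀ j, j < n → Leads ω j n)}

/-- The model hypotheses: independent edges, edge `(i,j)` present w.p. `p (j-i)`. -/
def GraphModel (p : ℕ → ℝ) (μ : Measure Cfg) : Prop :=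
  IsProbabilityMeasure μ ∧
  iIndepFun (β := fun _ : ℤ × ℤ => Bool)
    (fun e ω => ω e.1 e.2) μ ∧
  (∀ i j : ℤ, i < j → μ {ω | ω i j = true} = ENNReal.ofReal (p (j - i).toNat)) ∧
  (∀ i j : ℤ, j ≤ i → μ {ω | ω i j = true} = 0)

/-! ### Auxiliary material -/

set_option linter.unusedSectionVars false
set_option linter.unusedVariables false

/-- events depending on row `k` -/
def rowEvent (k : ℕ) : Set Cfg := {ω | ∃ j, j < k ∧ ω (-(k:ℤ)) (-(j:ℤ)) = true}

lemma leads_lt {ω : Cfg} {a b : ℤ} (h : Leads ω a b) : a < b := by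
  induction h with
  | single h => exact h.1
  | tail _ h ih => exact ih.trans h.1

lemma setA_eq (n : ℕ) :
    {ω : Cfg | ∀ k : ℕ, 1 ≤ k → k ≤ n → Leads ω (-(k : ℤ)) 0} =
      ⋂ k ∈ Finset.Icc 1 n, rowEvent k := by
  ext ω
  simp only [Set.mem_setOf_eq, Set.mem_iInter, Finset.mem_Icc]
  constructor
  · rintro h k ⟨hk1, hkn⟩
    have hl := h k hk1 hkn
    rcases (Relation.TransGen.head'_iff.mp hl) with ⟨b, hb, hb0⟩
    rcases Relation.reflTransGen_iff_eq_or_transGen.mp hb0 with rfl | htg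
    · refine ⟨0, by omega, ?_⟩
      simpa using hb.2
    · have hblt : b < 0 := leads_lt htg
      have hbgt : -(k:ℤ) < b := hb.1
      refine ⟨(-b).toNat, by omega, ?_⟩
      have : -((-b).toNat : ℤ) = b := by omega
      rw [this]; exact hb.2
  · intro h k hk1 hkn
    induction k using Nat.strong_induction_on with
    | _ k ih =>
      obtain ⟨j, hjk, hj⟩ := h k ⟨hk1, hkn⟩
      have hedge : Edge ω (-(k:ℤ)) (-(j:ℤ)) := ⟨by omega, hj⟩
      rcases Nat.eq_zero_or_pos j with rfl | hj1
      · simpa [Leads] using Relation.TransGen.single (by simpa using hedge)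
      · exact Relation.TransGen.head hedge (ih j hjk hj1 (by omega))

def rowFinset (k : ℕ) : Finset (ℤ × ℤ) :=
  (Finset.range k).image (fun j : ℕ => ((-(k:ℤ), -(j:ℤ)) : ℤ × ℤ))

lemma measurable_coord (a b : ℤ) : Measurable (fun ω : Cfg => ω a b) :=
  (measurable_pi_apply b).comp (measurable_pi_apply a)

lemma measurableSet_coord_true (a b : ℤ) : MeasurableSet {ω : Cfg | ω a b = true} :=
  measurable_coord a b (measurableSet_singleton true)

lemma measurableSet_rowEvent (k : ℕ) : MeasurableSet (rowEvent k) := by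
  have : rowEvent k = ⋃ j ∈ Finset.range k, {ω : Cfg | ω (-(k:ℤ)) (-(j:ℤ)) = true} := by
    ext ω; simp [rowEvent]
  rw [this]
  exact MeasurableSet.biUnion (Finset.range k).countable_toSet
    (fun j _ => measurableSet_coord_true _ _)

variable {p : ℕ → ℝ} {μ : Measure Cfg}

lemma meas_rowEvent (hp : ∀ k, 0 ≤ p k ∧ p k < 1) (hm : GraphModel p μ) (k : ℕ) :
    μ (rowEvent k) = ENNReal.ofReal (1 - ∏ m ∈ Finset.Icc 1 k, (1 - p m)) := by
  obtain ⟨hprob, hind, hedge, -⟩ := hm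
  haveI := hprob
  have hcompl : (rowEvent k)ᶜ = ⋂ j ∈ Finset.range k,
      {ω : Cfg | ω (-(k:ℤ)) (-(j:ℤ)) = false} := by
    ext ω
    simp [rowEvent, Bool.not_eq_true]
  -- measure of the complement
  have hsub : ∀ j ∈ Finset.range k,
      μ {ω : Cfg | ω (-(k:ℤ)) (-(j:ℤ)) = false} = ENNReal.ofReal (1 - p (k - j)) := by
    intro j hj
    rw [Finset.mem_range] at hj
    have h1 : {ω : Cfg | ω (-(k:ℤ)) (-(j:ℤ)) = false}
        = {ω : Cfg | ω (-(k:ℤ)) (-(j:ℤ)) = true}ᶜ := by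
      ext ω; simp [Bool.not_eq_true]
    have h2 : μ {ω : Cfg | ω (-(k:ℤ)) (-(j:ℤ)) = true} = ENNReal.ofReal (p (k - j)) := by
      rw [hedge _ _ (by omega)]
      congr 2
      omega
    rw [h1, prob_compl_eq_one_sub (measurableSet_coord_true _ _), h2,
      ENNReal.ofReal_sub _ (hp _).1, ENNReal.ofReal_one]
  have hinter : μ ((rowEvent k)ᶜ) = ∏ j ∈ Finset.range k, ENNReal.ofReal (1 - p (k - j)) := by
    rw [hcompl]
    have hre : (⋂ j ∈ Finset.range k, {ω : Cfg | ω (-(k:ℤ)) (-(j:ℤ)) = false})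
        = ⋂ e ∈ rowFinset k, {ω : Cfg | ω e.1 e.2 = false} := by
      simp only [rowFinset, Finset.set_biInter_finset_image]
    rw [hre]
    calc μ (⋂ e ∈ rowFinset k, {ω : Cfg | ω e.1 e.2 = false})
        = ∏ e ∈ rowFinset k, μ {ω : Cfg | ω e.1 e.2 = false} :=
          hind.meas_biInter (fun e _ => ⟨{false}, trivial, rfl⟩)
      _ = ∏ j ∈ Finset.range k, ENNReal.ofReal (1 - p (k - j)) := by
          rw [rowFinset, Finset.prod_image (by intro a _ b _ h; simpa using h)]
          exact Finset.prod_congr rfl (fun j hj => hsub j hj)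
  have hGprod : ∏ j ∈ Finset.range k, (1 - p (k - j)) = ∏ m ∈ Finset.Icc 1 k, (1 - p m) := by
    rw [← Finset.Ico_add_one_right_eq_Icc, Finset.prod_Ico_eq_prod_range]
    have hk1 : k + 1 - 1 = k := by omega
    rw [hk1, ← Finset.prod_range_reflect]
    refine Finset.prod_congr rfl (fun j hj => ?_)
    rw [Finset.mem_range] at hj
    have h2 : k - (k - 1 - j) = 1 + j := by omega
    rw [h2]
  have hnn : ∀ j ∈ Finset.range k, 0 ≤ 1 - p (k - j) := fun j _ => by
    have := (hp (k - j)).2; linarith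
  rw [← compl_compl (rowEvent k), prob_compl_eq_one_sub (measurableSet_rowEvent k).compl,
    hinter, ← ENNReal.ofReal_prod_of_nonneg hnn, hGprod,
    ← ENNReal.ofReal_one, ← ENNReal.ofReal_sub _ (Finset.prod_nonneg (by
      intro m hm; have := (hp m).2; linarith))]

lemma rowFinset_fst {k : ℕ} {e : ℤ × ℤ} (he : e ∈ rowFinset k) : e.1 = -(k:ℤ) := by
  simp only [rowFinset, Finset.mem_image] at he
  obtain ⟨j, -, rfl⟩ := he
  rfl

lemma meas_iInter_rowEvent (hm : GraphModel p μ) (n : ℕ) :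
    μ (⋂ k ∈ Finset.Icc 1 n, rowEvent k) = ∏ k ∈ Finset.Icc 1 n, μ (rowEvent k) := by
  obtain ⟨hprob, hind, -, -⟩ := hm
  haveI := hprob
  induction n with
  | zero => simp
  | succ n ihn =>
    rw [show Finset.Icc 1 (n + 1) = insert (n + 1) (Finset.Icc 1 n) by
      ext x; simp only [Finset.mem_Icc, Finset.mem_insert]; omega]
    rw [Finset.set_biInter_insert, Finset.prod_insert (by simp)]
    -- independence between row n+1 and the union of rows 1..n
    set S : Finset (ℤ × ℤ) := rowFinset (n + 1) with hS
    set T : Finset (ℤ × ℤ) := (Finset.Icc 1 n).biUnion rowFinset with hT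
    have hST : Disjoint S T := by
      rw [Finset.disjoint_left]
      intro e heS heT
      have h1 : e.1 = -((n + 1 : ℕ) : ℤ) := rowFinset_fst heS
      rw [Finset.mem_biUnion] at heT
      obtain ⟨k, hk, hek⟩ := heT
      have h2 : e.1 = -(k : ℤ) := rowFinset_fst hek
      rw [Finset.mem_Icc] at hk
      omega
    have hmeas : ∀ e : ℤ × ℤ, Measurable (fun ω : Cfg => ω e.1 e.2) :=
      fun e => measurable_coord e.1 e.2
    have hXY := hind.indepFun_finset S T hST hmeas
    -- target sets
    set UX : Set (S → Bool) := {g | ∃ i : S, g i = true} with hUX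
    set UY : Set (T → Bool) :=
      {g | ∀ k ∈ Finset.Icc 1 n, ∃ e : T, (e : ℤ × ℤ).1 = -(k : ℤ) ∧ g e = true} with hUY
    have hUXm : MeasurableSet UX := by
      have : UX = ⋃ i : S, (fun g : S → Bool => g i) ⁻¹' {true} := by
        ext g; simp [hUX]
      rw [this]
      exact MeasurableSet.iUnion fun i => measurable_pi_apply i (measurableSet_singleton true)
    have hUYm : MeasurableSet UY := by
      have : UY = ⋂ k ∈ Finset.Icc 1 n, ⋃ e : T, ⋃ (_ : (e : ℤ × ℤ).1 = -(k : ℤ)),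
          (fun g : T → Bool => g e) ⁻¹' {true} := by
        ext g; simp [hUY]
      rw [this]
      exact MeasurableSet.biInter (Finset.Icc 1 n).countable_toSet fun k _ =>
        MeasurableSet.iUnion fun e => MeasurableSet.iUnion fun _ =>
          measurable_pi_apply e (measurableSet_singleton true)
    have hXpre : rowEvent (n + 1) = (fun ω : Cfg => fun i : S => ω (i : ℤ × ℤ).1 (i : ℤ × ℤ).2) ⁻¹' UX := by
      ext ω
      simp only [rowEvent, Set.mem_setOf_eq, Set.mem_preimage, hUX]
      constructor
      · rintro ⟨j, hj, hωj⟩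
        refine ⟨⟨((-(n + 1 : ℕ) : ℤ), -(j : ℤ)), ?_⟩, hωj⟩
        simp only [hS, rowFinset, Finset.mem_image]
        exact ⟨j, Finset.mem_range.mpr hj, rfl⟩
      · rintro ⟨⟨e, he⟩, hg⟩
        simp only [hS, rowFinset, Finset.mem_image] at he
        obtain ⟨j, hj, rfl⟩ := he
        exact ⟨j, Finset.mem_range.mp hj, hg⟩
    have hYpre : (⋂ k ∈ Finset.Icc 1 n, rowEvent k)
        = (fun ω : Cfg => fun i : T => ω (i : ℤ × ℤ).1 (i : ℤ × ℤ).2) ⁻¹' UY := by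
      ext ω
      simp only [Set.mem_iInter, Set.mem_preimage, hUY, Set.mem_setOf_eq]
      constructor
      · intro h k hk
        obtain ⟨j, hj, hωj⟩ := h k hk
        refine ⟨⟨(-(k : ℤ), -(j : ℤ)), ?_⟩, rfl, hωj⟩
        rw [hT, Finset.mem_biUnion]
        refine ⟨k, hk, ?_⟩
        simp only [rowFinset, Finset.mem_image]
        exact ⟨j, Finset.mem_range.mpr hj, rfl⟩
      · intro h k hk
        obtain ⟨⟨e, he⟩, he1, hg⟩ := h k hk
        rw [hT, Finset.mem_biUnion] at he
        obtain ⟨k', hk', hek'⟩ := he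
        have h1 : e.1 = -(k' : ℤ) := rowFinset_fst hek'
        have hkk : k' = k := by
          rw [h1] at he1; omega
        subst hkk
        simp only [rowFinset, Finset.mem_image] at hek'
        obtain ⟨j, hjr, rfl⟩ := hek'
        exact ⟨j, Finset.mem_range.mp hjr, hg⟩
    rw [hXpre, hYpre, indepFun_iff_measure_inter_preimage_eq_mul.mp hXY UX UY hUXm hUYm,
      ← hYpre, ihn]

/-- Weierstrass-type inequality. -/
lemma one_sub_sum_le_prod_one_sub' (s : Finset ℕ) (x : ℕ → ℝ)
    (h0 : ∀ i ∈ s, 0 ≤ x i) (h1 : ∀ i ∈ s, x i ≤ 1) :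
    1 - ∑ i ∈ s, x i ≤ ∏ i ∈ s, (1 - x i) := by
  classical
  induction s using Finset.induction_on with
  | empty => simp
  | insert a s ha ih =>
    rw [Finset.sum_insert ha, Finset.prod_insert ha]
    have h0' : ∀ i ∈ s, 0 ≤ x i := fun i hi => h0 i (Finset.mem_insert_of_mem hi)
    have h1' : ∀ i ∈ s, x i ≤ 1 := fun i hi => h1 i (Finset.mem_insert_of_mem hi)
    have ihs := ih h0' h1'
    have hxa0 := h0 a (Finset.mem_insert_self a s)
    have hxa1 := h1 a (Finset.mem_insert_self a s)
    have hsum0 : 0 ≤ ∑ i ∈ s, x i := Finset.sum_nonneg h0'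
    nlinarith [mul_le_mul_of_nonneg_left ihs (by linarith : (0:ℝ) ≤ 1 - x a)]

noncomputable def Gr (p : ℕ → ℝ) (k : ℕ) : ℝ := ∏ m ∈ Finset.Icc 1 k, (1 - p m)
noncomputable def Pr (p : ℕ → ℝ) (n : ℕ) : ℝ := ∏ k ∈ Finset.Icc 1 n, (1 - Gr p k)
noncomputable def Lr (p : ℕ → ℝ) : ℝ := ⨅ n, Pr p n

section analysis
variable (hp : ∀ k, 0 ≤ p k ∧ p k < 1) (hp1 : 0 < p 1)
include hp

lemma Gr_nonneg (k : ℕ) : 0 ≤ Gr p k :=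
  Finset.prod_nonneg fun m _ => by have := (hp m).2; linarith

lemma Gr_le_one (k : ℕ) : Gr p k ≤ 1 :=
  Finset.prod_le_one (fun m _ => by have := (hp m).2; linarith)
    (fun m _ => by have := (hp m).1; linarith)

lemma Gr_le (k : ℕ) (hk : 1 ≤ k) : Gr p k ≤ 1 - p 1 := by
  have h1 : Finset.Icc 1 k = insert 1 (Finset.Icc 2 k) := by
    ext x; simp only [Finset.mem_Icc, Finset.mem_insert]; omega
  rw [Gr, h1, Finset.prod_insert (by simp)]
  have h2 : ∏ m ∈ Finset.Icc 2 k, (1 - p m) ≤ 1 :=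
    Finset.prod_le_one (fun m _ => by have := (hp m).2; linarith)
      (fun m _ => by have := (hp m).1; linarith)
  have h3 : 0 ≤ 1 - p 1 := by have := (hp 1).2; linarith
  nlinarith

include hp1

lemma F_ge (k : ℕ) (hk : 1 ≤ k) : p 1 ≤ 1 - Gr p k := by
  have := Gr_le hp k hk; linarith

lemma F_pos (k : ℕ) (hk : 1 ≤ k) : 0 < 1 - Gr p k := lt_of_lt_of_le hp1 (F_ge hp hp1 k hk)

lemma Pr_pos (n : ℕ) : 0 < Pr p n :=
  Finset.prod_pos fun k hk => F_pos hp hp1 k (Finset.mem_Icc.mp hk).1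

lemma Pr_le_one (n : ℕ) : Pr p n ≤ 1 :=
  Finset.prod_le_one (fun k hk => (F_pos hp hp1 k (Finset.mem_Icc.mp hk).1).le)
    (fun k _ => by have := Gr_nonneg hp k; linarith)

omit hp hp1 in
lemma Pr_succ (n : ℕ) : Pr p (n + 1) = Pr p n * (1 - Gr p (n + 1)) := by
  rw [Pr, Pr, show Finset.Icc 1 (n + 1) = insert (n + 1) (Finset.Icc 1 n) by
    ext x; simp only [Finset.mem_Icc, Finset.mem_insert]; omega,
    Finset.prod_insert (by simp), mul_comm]

lemma Pr_anti : Antitone (Pr p) := by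
  refine antitone_nat_of_succ_le fun n => ?_
  rw [Pr_succ]
  have h1 := (Pr_pos hp hp1 n).le
  have h2 := Gr_nonneg hp (n + 1)
  nlinarith

lemma Lr_le (n : ℕ) : Lr p ≤ Pr p n :=
  ciInf_le ⟨0, fun x ⟨n, hn⟩ => hn ▸ (Pr_pos hp hp1 n).le⟩ n

lemma Lr_nonneg : 0 ≤ Lr p := le_ciInf fun n => (Pr_pos hp hp1 n).le

lemma Lr_lt_one : Lr p < 1 := by
  have h1 : Pr p 1 = p 1 := by simp [Pr, Gr]
  have := Lr_le hp hp1 1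
  rw [h1] at this
  have := (hp 1).2
  linarith

lemma tendsto_Pr : Tendsto (Pr p) atTop (nhds (Lr p)) :=
  tendsto_atTop_ciInf (Pr_anti hp hp1) ⟨0, fun x ⟨n, hn⟩ => hn ▸ (Pr_pos hp hp1 n).le⟩

end analysis

section tail
variable (hp : ∀ k, 0 ≤ p k ∧ p k < 1) (hp1 : 0 < p 1)
  (hsum : Summable (fun k : ℕ => ∏ m ∈ Finset.Icc 1 (k + 1), (1 - p m)))
include hp hsum

lemma Gr_summable (n : ℕ) : Summable (fun m : ℕ => Gr p (n + 1 + m)) := by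
  have h0 : Summable (fun k : ℕ => Gr p (k + 1)) := hsum
  have h1 := (summable_nat_add_iff n).mpr h0
  refine h1.congr fun m => ?_
  congr 1
  omega

omit hsum in
lemma telescope (n : ℕ) : ∀ N, n ≤ N →
    Pr p n - Pr p N = ∑ k ∈ Finset.Ico n N, Pr p k * Gr p (k + 1) := by
  refine Nat.le_induction ?_ ?_
  · simp
  · intro N hnN ih
    rw [Finset.sum_Ico_succ_top hnN, ← ih, Pr_succ]
    ring

include hp1

lemma tail_bound (n : ℕ) :
    Lr p * (∑' m : ℕ, Gr p (n + 1 + m)) ≤ Pr p n - Lr p ∧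
    Pr p n - Lr p ≤ ∑' m : ℕ, Gr p (n + 1 + m) := by
  have hsummable := Gr_summable hp hsum n
  set S : ℝ := ∑' m : ℕ, Gr p (n + 1 + m) with hSdef
  -- partial sums of the tail
  have hpartial : Tendsto (fun N : ℕ => ∑ k ∈ Finset.Ico n N, Gr p (k + 1))
      atTop (nhds S) := by
    have h1 : ∀ N : ℕ, ∑ k ∈ Finset.Ico n N, Gr p (k + 1)
        = ∑ i ∈ Finset.range (N - n), Gr p (n + 1 + i) := by
      intro N
      rw [Finset.sum_Ico_eq_sum_range]
      exact Finset.sum_congr rfl fun i _ => by congr 1; omega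
    simp only [h1]
    exact (hsummable.hasSum.tendsto_sum_nat).comp (tendsto_sub_atTop_nat n)
  have htendPn : Tendsto (fun N : ℕ => Pr p n - Pr p N) atTop (nhds (Pr p n - Lr p)) :=
    tendsto_const_nhds.sub (tendsto_Pr hp hp1)
  constructor
  · refine le_of_tendsto_of_tendsto (tendsto_const_nhds.mul hpartial) htendPn ?_
    filter_upwards [eventually_ge_atTop n] with N hN
    rw [telescope hp n N hN, Finset.mul_sum]
    refine Finset.sum_le_sum fun k _ => ?_
    exact mul_le_mul_of_nonneg_right (Lr_le hp hp1 k) (Gr_nonneg hp (k + 1))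
  · refine le_of_tendsto_of_tendsto htendPn hpartial ?_
    filter_upwards [eventually_ge_atTop n] with N hN
    rw [telescope hp n N hN]
    refine Finset.sum_le_sum fun k _ => ?_
    calc Pr p k * Gr p (k + 1) ≤ 1 * Gr p (k + 1) :=
          mul_le_mul_of_nonneg_right (Pr_le_one hp hp1 k) (Gr_nonneg hp (k + 1))
      _ = Gr p (k + 1) := one_mul _

lemma Lr_pos : 0 < Lr p := by
  -- choose N with small tail
  obtain ⟨N, hN⟩ : ∃ N : ℕ, ∑' m : ℕ, Gr p (N + 1 + m) ≤ 1 / 2 := by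
    have h0 : Summable (fun k : ℕ => Gr p (k + 1)) := hsum
    set Stot : ℝ := ∑' k : ℕ, Gr p (k + 1) with hStot
    have hps : Tendsto (fun N : ℕ => ∑ k ∈ Finset.range N, Gr p (k + 1))
        atTop (nhds Stot) := h0.hasSum.tendsto_sum_nat
    have hev : ∀ᶠ N : ℕ in atTop,
        Stot - 1 / 2 < ∑ k ∈ Finset.range N, Gr p (k + 1) :=
      hps.eventually_const_lt (by linarith)
    obtain ⟨N, hN⟩ := hev.exists
    refine ⟨N, ?_⟩
    have htail : ∑ k ∈ Finset.range N, Gr p (k + 1) + ∑' m : ℕ, Gr p (m + N + 1) = Stot := by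
      rw [hStot]
      rw [← h0.sum_add_tsum_nat_add N]
    have heq : (∑' m : ℕ, Gr p (N + 1 + m)) = ∑' m : ℕ, Gr p (m + N + 1) := by
      refine tsum_congr fun m => ?_; congr 1; omega
    rw [heq]
    linarith
  have hhalf : ∀ n : ℕ, Pr p N * (1 / 2) ≤ Pr p n := by
    intro n
    rcases le_total n N with h | h
    · have h1 := Pr_anti hp hp1 h
      have h2 := (Pr_pos hp hp1 N).le
      nlinarith
    · -- n ≥ N : split the product
      have hsplit : Pr p n = Pr p N * ∏ k ∈ Finset.Ico (N + 1) (n + 1), (1 - Gr p k) := by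
        rw [Pr, Pr, ← Finset.Ico_add_one_right_eq_Icc, ← Finset.Ico_add_one_right_eq_Icc,
          ← Finset.prod_Ico_consecutive _ (by omega : 1 ≤ N + 1) (by omega : N + 1 ≤ n + 1)]
      have hges : ∑ k ∈ Finset.Ico (N + 1) (n + 1), Gr p k ≤ 1 / 2 := by
        have h1 : ∑ k ∈ Finset.Ico (N + 1) (n + 1), Gr p k
            = ∑ i ∈ Finset.range (n + 1 - (N + 1)), Gr p (N + 1 + i) := by
          rw [Finset.sum_Ico_eq_sum_range]
        rw [h1]
        refine le_trans ?_ hN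
        exact Summable.sum_le_tsum _ (fun i _ => Gr_nonneg hp _) (Gr_summable hp hsum N)
      have hwei : 1 - ∑ k ∈ Finset.Ico (N + 1) (n + 1), Gr p k
          ≤ ∏ k ∈ Finset.Ico (N + 1) (n + 1), (1 - Gr p k) :=
        one_sub_sum_le_prod_one_sub' _ _ (fun i _ => Gr_nonneg hp i)
          (fun i _ => Gr_le_one hp i)
      have h2 : (1:ℝ) / 2 ≤ ∏ k ∈ Finset.Ico (N + 1) (n + 1), (1 - Gr p k) := by linarith
      rw [hsplit]
      exact mul_le_mul_of_nonneg_left h2 (Pr_pos hp hp1 N).le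
  have := le_ciInf hhalf
  have hPN := Pr_pos hp hp1 N
  calc (0:ℝ) < Pr p N * (1 / 2) := by nlinarith
    _ ≤ Lr p := this
end tail

/-- the conditional tail of `μ` is comparable to the integrated
tail of `ξ`. -/
theorem stmt_9 (p : ℕ → ℝ) (hp : ∀ k, 0 ≤ p k ∧ p k < 1)
    (hp1 : 0 < p 1)
    (hsum : Summable (fun k : ℕ => ∏ m ∈ Finset.Icc 1 (k + 1), (1 - p m)))
    (μ : Measure Cfg) (hmodel : GraphModel p μ) :
    ∃ C₁ C₂ : ℝ, 0 < C₁ ∧ C₁ < C₂ ∧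
      ∀ n : ℕ,
        C₁ * (∑' m : ℕ, ∏ j ∈ Finset.Icc 1 (n + 1 + m), (1 - p j)) ≤
          (μ {ω | (∀ k : ℕ, 1 ≤ k → k ≤ n → Leads ω (-(k : ℤ)) 0) ∧
              ∃ m : ℕ, n < m ∧ ¬ Leads ω (-(m : ℤ)) 0}).toReal /
            (μ {ω | ∃ m : ℕ, 0 < m ∧ ¬ Leads ω (-(m : ℤ)) 0}).toReal ∧
        (μ {ω | (∀ k : ℕ, 1 ≤ k → k ≤ n → Leads ω (-(k : ℤ)) 0) ∧
              ∃ m : ℕ, n < m ∧ ¬ Leads ω (-(m : ℤ)) 0}).toReal /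
            (μ {ω | ∃ m : ℕ, 0 < m ∧ ¬ Leads ω (-(m : ℤ)) 0}).toReal ≤
          C₂ * (∑' m : ℕ, ∏ j ∈ Finset.Icc 1 (n + 1 + m), (1 - p j)) := by
  haveI hprob := hmodel.1
  -- the events
  set A : ℕ → Set Cfg :=
    fun n => {ω | ∀ k : ℕ, 1 ≤ k → k ≤ n → Leads ω (-(k : ℤ)) 0} with hA
  set Ainf : Set Cfg := {ω | ∀ m : ℕ, 1 ≤ m → Leads ω (-(m : ℤ)) 0} with hAinf
  have hAm : ∀ n, MeasurableSet (A n) := by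
    intro n
    simp only [hA]
    rw [setA_eq]
    exact MeasurableSet.biInter (Finset.Icc 1 n).countable_toSet
      (fun k _ => measurableSet_rowEvent k)
  have hAinfeq : Ainf = ⋂ n, A n := by
    ext ω
    simp only [hAinf, hA, Set.mem_setOf_eq, Set.mem_iInter]
    exact ⟨fun h n k hk1 hkn => h k hk1, fun h m hm => h m m hm le_rfl⟩
  have hAinfm : MeasurableSet Ainf := hAinfeq ▸ MeasurableSet.iInter hAm
  have hanti : Antitone A := fun n m hnm ω h k hk1 hkn => h k hk1 (hkn.trans hnm)
  -- measure of A n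
  have hμA : ∀ n, μ (A n) = ENNReal.ofReal (Pr p n) := by
    intro n
    simp only [hA]
    have hnn : ∀ k ∈ Finset.Icc 1 n, 0 ≤ 1 - ∏ m ∈ Finset.Icc 1 k, (1 - p m) :=
      fun k hk => (F_pos hp hp1 k (Finset.mem_Icc.mp hk).1).le
    rw [setA_eq, meas_iInter_rowEvent hmodel,
      Finset.prod_congr rfl (fun k _ => meas_rowEvent hp hmodel k),
      ← ENNReal.ofReal_prod_of_nonneg hnn]
    rfl
  -- measure of Ainf
  have hμAinf : μ Ainf = ENNReal.ofReal (Lr p) := by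
    have ht1 : Tendsto (fun n => μ (A n)) atTop (nhds (μ (⋂ n, A n))) :=
      tendsto_measure_iInter_atTop (fun n => (hAm n).nullMeasurableSet) hanti
        ⟨0, measure_ne_top μ _⟩
    have ht2 : Tendsto (fun n => μ (A n)) atTop (nhds (ENNReal.ofReal (Lr p))) := by
      simp only [hμA]
      exact ENNReal.tendsto_ofReal (tendsto_Pr hp hp1)
    rw [hAinfeq]
    exact tendsto_nhds_unique ht1 ht2
  have hsubset : ∀ n, Ainf ⊆ A n := fun n => hAinfeq ▸ Set.iInter_subset A n
  -- key constants
  have hL0 : 0 < Lr p := Lr_pos hp hp1 hsum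
  have hL1 : Lr p < 1 := Lr_lt_one hp hp1
  have h1mL : 0 < 1 - Lr p := by linarith
  -- numerator
  have hnumset : ∀ n : ℕ, {ω : Cfg | (∀ k : ℕ, 1 ≤ k → k ≤ n → Leads ω (-(k : ℤ)) 0) ∧
      ∃ m : ℕ, n < m ∧ ¬ Leads ω (-(m : ℤ)) 0} = A n \ Ainf := by
    intro n
    ext ω
    simp only [Set.mem_setOf_eq, Set.mem_diff, hA, hAinf]
    constructor
    · rintro ⟨h1, m, hm, hm2⟩
      exact ⟨h1, fun hall => hm2 (hall m (by omega))⟩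
    · rintro ⟨h1, h2⟩
      refine ⟨h1, ?_⟩
      by_contra hcon
      push_neg at hcon
      refine h2 fun m hm => ?_
      rcases le_or_gt m n with h | h
      · exact h1 m hm h
      · exact hcon m h
  have hnum : ∀ n : ℕ, (μ (A n \ Ainf)).toReal = Pr p n - Lr p := by
    intro n
    rw [measure_diff (hsubset n) hAinfm.nullMeasurableSet (measure_ne_top μ _),
      hμA, hμAinf, ← ENNReal.ofReal_sub _ (Lr_nonneg hp hp1),
      ENNReal.toReal_ofReal (by have := Lr_le hp hp1 n; linarith)]
  -- denominator
  have hdenset : {ω : Cfg | ∃ m : ℕ, 0 < m ∧ ¬ Leads ω (-(m : ℤ)) 0} = Ainfᶜ := by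
    ext ω
    simp only [Set.mem_setOf_eq, Set.mem_compl_iff, hAinf]
    push_neg
    constructor
    · rintro ⟨m, hm, hm2⟩; exact ⟨m, hm, hm2⟩
    · rintro ⟨m, hm, hm2⟩; exact ⟨m, hm, hm2⟩
  have hden : (μ Ainfᶜ).toReal = 1 - Lr p := by
    rw [prob_compl_eq_one_sub hAinfm, hμAinf,
      ← ENNReal.ofReal_one, ← ENNReal.ofReal_sub _ (Lr_nonneg hp hp1),
      ENNReal.toReal_ofReal (by linarith)]
  refine ⟨Lr p / (1 - Lr p), 1 / (1 - Lr p), div_pos hL0 h1mL, by gcongr, fun n => ?_⟩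
  have hS := tail_bound hp hp1 hsum n
  have hEq : (∑' m : ℕ, ∏ j ∈ Finset.Icc 1 (n + 1 + m), (1 - p j))
      = ∑' m : ℕ, Gr p (n + 1 + m) := rfl
  rw [hnumset n, hdenset, hEq]
  rw [show ((μ (A n \ Ainf)).toReal / (μ Ainfᶜ).toReal)
      = (Pr p n - Lr p) / (1 - Lr p) by rw [hnum n, hden]]
  constructor
  · rw [div_mul_eq_mul_div]
    gcongr
    exact hS.1
  · rw [div_mul_eq_mul_div, one_mul]
    gcongr
    exact hS.2
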